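/- Verification theorem for the signed multi-marginal Schrödinger problem: let 𝐐 be an array with strictly positive entries and X an array with values in {−1, +1}, and suppose there exist strictly positive scalars α^{(ℓ)}_j (for each ℓ ∈ {1,…,n} and j ∈ I_ℓ) such that the array 𝐏 defined by 𝐏_k = 𝐐_k · Π_{ℓ=1}^n (α^{(ℓ)}_{k_ℓ})^{X_k} satisfies all signed marginal constraints Σ_{k : k_ℓ = j} X_k 𝐏_k = p^{(ℓ)}_j. Then for every nonnegative array 𝐏' satisfying the same signed marginal constraints, S(𝐏', 𝐐) ≥ S(𝐏, 𝐐), with equality if and only if 𝐏' = 𝐏. -/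

import Mathlib

open scoped BigOperators

/-- Pointwise Gibbs inequality: for `a > 0`, `b > 0`, `b ≠ a`,
`b * log (b / a) - b + a > 0`. -/
lemma gibbs_pointwise_aux (a b : ℝ) (ha : 0 < a) (hb : 0 < b) (hne : b ≠ a) :
    0 < b * Real.log (b / a) - b + a := by
  have hx : 0 < a / b := by positivity
  have hx1 : a / b ≠ 1 := by
    intro h1
    rw [div_eq_one_iff_eq hb.ne'] at h1
    exact hne h1.symm
  have h := Real.log_lt_sub_one_of_pos hx hx1
  have hlog : Real.log (a / b) = - Real.log (b / a) := by
    rw [← Real.log_inv]; congr 1; field_simp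
  rw [hlog] at h
  have h2 := mul_lt_mul_of_pos_left h hb
  have h3 : b * (a / b - 1) = a - b := by field_simp
  rw [mul_neg, h3] at h2
  linarith

/-- Verification theorem for the signed multi-marginal Schrödinger
problem: if `𝐏_k = 𝐐_k · Π_ℓ (α^{(ℓ)}_{k_ℓ})^{X_k}` (with `(α)^{X_k} = α` when
`X_k = +1` and `= α⁻¹` when `X_k = −1`) with strictly positive scalings satisfies the
signed marginal constraints, then `𝐏` minimizes `S(·, 𝐐)` over all nonnegative arrays
with the same signed marginals, and it is the unique minimizer. -/
theorem signed_schrodinger_verification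
    (n : ℕ) (hn : 1 ≤ n) (I : Fin n → Type)
    [∀ ℓ, Fintype (I ℓ)] [∀ ℓ, Nonempty (I ℓ)] [∀ ℓ, DecidableEq (I ℓ)]
    (Q : (∀ ℓ, I ℓ) → ℝ) (hQ : ∀ k, 0 < Q k)
    (X : (∀ ℓ, I ℓ) → ℝ) (hX : ∀ k, X k = 1 ∨ X k = -1)
    (p : ∀ ℓ, I ℓ → ℝ) (hp : ∀ ℓ j, 0 < p ℓ j)
    (α : ∀ ℓ, I ℓ → ℝ) (hα : ∀ ℓ j, 0 < α ℓ j)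
    (P : (∀ ℓ, I ℓ) → ℝ)
    (hPdef : ∀ k, P k = Q k *
      (if X k = 1 then ∏ ℓ, α ℓ (k ℓ) else (∏ ℓ, α ℓ (k ℓ))⁻¹))
    (hPmarg : ∀ (ℓ : Fin n) (j : I ℓ),
      ∑ k : ∀ ℓ, I ℓ, (if k ℓ = j then X k * P k else 0) = p ℓ j) :
    ∀ P' : (∀ ℓ, I ℓ) → ℝ, (∀ k, 0 ≤ P' k) →
      (∀ (ℓ : Fin n) (j : I ℓ),
        ∑ k : ∀ ℓ, I ℓ, (if k ℓ = j then X k * P' k else 0) = p ℓ j) →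
      (∑ k : ∀ ℓ, I ℓ, P k * (Real.log (P k / Q k) - 1) ≤
          ∑ k : ∀ ℓ, I ℓ, P' k * (Real.log (P' k / Q k) - 1) ∧
        (∑ k : ∀ ℓ, I ℓ, P' k * (Real.log (P' k / Q k) - 1) =
            ∑ k : ∀ ℓ, I ℓ, P k * (Real.log (P k / Q k) - 1) ↔ P' = P)) := by
  intro P' hP'nn hP'marg
  have hprod : ∀ k : ∀ ℓ, I ℓ, 0 < ∏ ℓ, α ℓ (k ℓ) := fun k =>
    Finset.prod_pos (fun ℓ _ => hα ℓ (k ℓ))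
  have hPpos : ∀ k, 0 < P k := by
    intro k
    rw [hPdef k]
    rcases hX k with h | h
    · rw [if_pos h]; exact mul_pos (hQ k) (hprod k)
    · rw [if_neg (by rw [h]; norm_num)]
      exact mul_pos (hQ k) (inv_pos.mpr (hprod k))
  -- log (P k / Q k) = X k * ∑ ℓ, log (α ℓ (k ℓ))
  have hL : ∀ k, Real.log (P k / Q k) = X k * ∑ ℓ, Real.log (α ℓ (k ℓ)) := by
    intro k
    have hlp : Real.log (∏ ℓ, α ℓ (k ℓ)) = ∑ ℓ, Real.log (α ℓ (k ℓ)) :=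
      Real.log_prod (fun ℓ _ => (hα ℓ (k ℓ)).ne')
    rcases hX k with h | h
    · rw [hPdef k, if_pos h, h, one_mul,
        mul_div_cancel_left₀ _ (hQ k).ne', hlp]
    · rw [hPdef k, if_neg (by rw [h]; norm_num), h,
        mul_div_cancel_left₀ _ (hQ k).ne', Real.log_inv, hlp, neg_one_mul]
  -- key: the weighted sum of log (P/Q) only depends on the marginals
  have key : ∀ R : (∀ ℓ, I ℓ) → ℝ,
      (∀ (ℓ : Fin n) (j : I ℓ),
        ∑ k : ∀ ℓ, I ℓ, (if k ℓ = j then X k * R k else 0) = p ℓ j) →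
      ∑ k : ∀ ℓ, I ℓ, R k * Real.log (P k / Q k)
        = ∑ ℓ, ∑ j, p ℓ j * Real.log (α ℓ j) := by
    intro R hR
    calc ∑ k : ∀ ℓ, I ℓ, R k * Real.log (P k / Q k)
        = ∑ k : ∀ ℓ, I ℓ, ∑ ℓ, (X k * R k) * Real.log (α ℓ (k ℓ)) := by
          refine Finset.sum_congr rfl fun k _ => ?_
          rw [hL k, Finset.mul_sum, Finset.mul_sum]
          refine Finset.sum_congr rfl fun ℓ _ => ?_
          ring
      _ = ∑ ℓ, ∑ k : ∀ ℓ, I ℓ, (X k * R k) * Real.log (α ℓ (k ℓ)) :=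
          Finset.sum_comm
      _ = ∑ ℓ, ∑ j, p ℓ j * Real.log (α ℓ j) := by
          refine Finset.sum_congr rfl fun ℓ _ => ?_
          have step1 : ∑ k : ∀ ℓ, I ℓ, (X k * R k) * Real.log (α ℓ (k ℓ))
              = ∑ k : ∀ ℓ, I ℓ, ∑ j,
                  (if k ℓ = j then (X k * R k) * Real.log (α ℓ j) else 0) := by
            refine Finset.sum_congr rfl fun k _ => ?_
            rw [Finset.sum_ite_eq Finset.univ (k ℓ)
              (fun j => (X k * R k) * Real.log (α ℓ j))]
            simp
          rw [step1, Finset.sum_comm]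
          refine Finset.sum_congr rfl fun j _ => ?_
          have step2 : ∀ k : ∀ ℓ, I ℓ,
              (if k ℓ = j then (X k * R k) * Real.log (α ℓ j) else 0)
              = (if k ℓ = j then X k * R k else 0) * Real.log (α ℓ j) := by
            intro k; split <;> simp
          rw [Finset.sum_congr rfl fun k _ => step2 k, ← Finset.sum_mul, hR ℓ j]
  have hkey : ∑ k : ∀ ℓ, I ℓ, P' k * Real.log (P k / Q k)
      = ∑ k : ∀ ℓ, I ℓ, P k * Real.log (P k / Q k) := by
    rw [key P' hP'marg, key P hPmarg]
  -- the gap function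
  set g : (∀ ℓ, I ℓ) → ℝ := fun k =>
    P' k * Real.log (P' k / Q k) - P' k * Real.log (P k / Q k) - P' k + P k
    with hg_def
  have hdiff : ∑ k : ∀ ℓ, I ℓ, P' k * (Real.log (P' k / Q k) - 1)
      - ∑ k : ∀ ℓ, I ℓ, P k * (Real.log (P k / Q k) - 1)
      = ∑ k : ∀ ℓ, I ℓ, g k := by
    rw [hg_def]
    simp only [mul_sub, mul_one]
    rw [Finset.sum_sub_distrib, Finset.sum_sub_distrib]
    have expand : ∑ k : ∀ ℓ, I ℓ,
        (P' k * Real.log (P' k / Q k) - P' k * Real.log (P k / Q k) - P' k + P k)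
        = ∑ k : ∀ ℓ, I ℓ, P' k * Real.log (P' k / Q k)
          - ∑ k : ∀ ℓ, I ℓ, P' k * Real.log (P k / Q k)
          - ∑ k : ∀ ℓ, I ℓ, P' k + ∑ k : ∀ ℓ, I ℓ, P k := by
      rw [Finset.sum_add_distrib, Finset.sum_sub_distrib, Finset.sum_sub_distrib]
    rw [expand, hkey]
    ring
  -- pointwise analysis of g
  have hgkey : ∀ k, 0 ≤ g k ∧ (g k = 0 ↔ P' k = P k) := by
    intro k
    rcases eq_or_lt_of_le (hP'nn k) with h0 | hpos
    · have hgv : g k = P k := by rw [hg_def]; simp [← h0]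
      constructor
      · rw [hgv]; exact (hPpos k).le
      · rw [hgv]
        constructor
        · intro h; exact absurd h (hPpos k).ne'
        · intro h; rw [← h, ← h0]
    · have hlogdiv : Real.log (P' k / Q k) - Real.log (P k / Q k)
          = Real.log (P' k / P k) := by
        rw [Real.log_div hpos.ne' (hQ k).ne', Real.log_div (hPpos k).ne' (hQ k).ne',
          Real.log_div hpos.ne' (hPpos k).ne']
        ring
      have hgv : g k = P' k * Real.log (P' k / P k) - P' k + P k := by
        rw [hg_def]
        simp only []
        rw [← hlogdiv]
        ring
      by_cases heq : P' k = P k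
      · have hz : g k = 0 := by
          rw [hgv, heq, div_self (hPpos k).ne', Real.log_one]; ring
        exact ⟨hz.ge, by simp [hz, heq]⟩
      · have hstrict := gibbs_pointwise_aux (P k) (P' k) (hPpos k) hpos heq
        rw [← hgv] at hstrict
        exact ⟨hstrict.le, fun h => absurd h.symm hstrict.ne, fun h => absurd h heq⟩
  have hsum_nonneg : 0 ≤ ∑ k : ∀ ℓ, I ℓ, g k :=
    Finset.sum_nonneg fun k _ => (hgkey k).1
  constructor
  · linarith [hdiff, hsum_nonneg]
  · constructor
    · intro h
      have hz : ∑ k : ∀ ℓ, I ℓ, g k = 0 := by linarith [hdiff]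
      have hall := (Finset.sum_eq_zero_iff_of_nonneg
        (fun k _ => (hgkey k).1)).mp hz
      funext k
      exact ((hgkey k).2).mp (hall k (Finset.mem_univ k))
    · intro h
      rw [h]
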